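/- Let T ⊆ 2^{<ω} be an n-fat tree, i.e., a nonempty tree such that for every node s ∈ T and every m ∈ n there is a splitting node t ∈ T extending s whose length is congruent to m mod n. Then the set [T] of infinite branches of T is not in the ideal J_n. -/

import Mathlib

/-- The least coordinate where two elements of Cantor space differ. -/
noncomputable def Δ (x y : ℕ → Bool) : ℕ := sInf {m | x m ≠ y m}

/-- `X` omits the color `m` under `c_n`: no two distinct elements of `X` first
differ at a coordinate congruent to `m` mod `n`. -/
def omitsColor (n m : ℕ) (X : Set (ℕ → Bool)) : Prop :=
  ∀ x ∈ X, ∀ y ∈ X, x ≠ y → Δ x y % n ≠ m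

/-- Membership in the σ-ideal `J_n`, σ-generated by the sets omitting a color. -/
def memJ (n : ℕ) (A : Set (ℕ → Bool)) : Prop :=
  ∃ X : ℕ → Set (ℕ → Bool), (∀ i, ∃ m < n, omitsColor n m (X i)) ∧ A ⊆ ⋃ i, X i

/-- A tree of finite binary sequences: closed under initial segments. -/
def IsTree (T : Set (List Bool)) : Prop := ∀ s ∈ T, ∀ t : List Bool, t <+: s → t ∈ T

/-- `t` is a splitting node of `T`. -/
def Splits (T : Set (List Bool)) (t : List Bool) : Prop :=
  t ∈ T ∧ t ++ [false] ∈ T ∧ t ++ [true] ∈ T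

/-- An `n`-fat tree. -/
def nFat (n : ℕ) (T : Set (List Bool)) : Prop :=
  IsTree T ∧ T.Nonempty ∧
    ∀ s ∈ T, ∀ m < n, ∃ t : List Bool, s <+: t ∧ Splits T t ∧ t.length % n = m

/-- The set of infinite branches of a tree. -/
def branches (T : Set (List Bool)) : Set (ℕ → Bool) :=
  {x | ∀ k : ℕ, (List.ofFn fun i : Fin k => x i) ∈ T}

/-- `x` agrees with the finite sequence `t` on its domain. -/
def Agrees (t : List Bool) (x : ℕ → Bool) : Prop :=
  ∀ k (h : k < t.length), x k = t[k]

lemma prefix_getElem {a c : List Bool} (h : a <+: c) {k : ℕ} (hk : k < a.length) :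
    a[k] = getElem c k (lt_of_lt_of_le hk h.length_le) := by
  obtain ⟨d, rfl⟩ := h
  exact (List.getElem_append_left hk).symm

lemma agrees_of_prefix {s t : List Bool} {x : ℕ → Bool} (hst : s <+: t) (h : Agrees t x) :
    Agrees s x := by
  intro k hk
  rw [prefix_getElem hst hk]
  exact h k _

lemma delta_eq {x y : ℕ → Bool} {L : ℕ} (h1 : ∀ k < L, x k = y k) (h2 : x L ≠ y L) :
    Δ x y = L := by
  have hL : L ∈ {m | x m ≠ y m} := h2
  have hmem := Nat.sInf_mem ⟨L, hL⟩
  have hle := Nat.sInf_le hL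
  rcases lt_or_eq_of_le hle with h | h
  · exact absurd (h1 _ h) hmem
  · exact h

lemma key {n : ℕ} {T : Set (List Bool)} (hT : nFat n T)
    {X : Set (ℕ → Bool)} {m : ℕ} (hm : m < n) (homit : omitsColor n m X)
    {s : List Bool} (hs : s ∈ T) :
    ∃ t ∈ T, s <+: t ∧ s.length < t.length ∧ ∀ x, Agrees t x → x ∉ X := by
  obtain ⟨t, hst, ⟨htT, ht0, ht1⟩, hlen⟩ := hT.2.2 s hs m hm
  have hslen : s.length ≤ t.length := hst.length_le
  have main : ∀ b : Bool, (t ++ [b] ∈ T) → (∀ x ∈ X, ¬ Agrees (t ++ [b]) x) →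
      ∃ t' ∈ T, s <+: t' ∧ s.length < t'.length ∧ ∀ x, Agrees t' x → x ∉ X := by
    intro b hb hno
    refine ⟨t ++ [b], hb, hst.trans ⟨[b], rfl⟩, by simp; omega, ?_⟩
    intro x hx hxX
    exact hno x hxX hx
  by_cases h : ∃ x ∈ X, Agrees (t ++ [false]) x
  · obtain ⟨x0, hx0, hax0⟩ := h
    apply main true ht1
    intro y hyX hay
    have hLlt0 : t.length < (t ++ [false]).length := by simp
    have hLlt1 : t.length < (t ++ [true]).length := by simp
    have hx0L : x0 t.length = false := by
      rw [hax0 t.length hLlt0]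
      exact List.getElem_concat_length rfl _
    have hyL : y t.length = true := by
      rw [hay t.length hLlt1]
      exact List.getElem_concat_length rfl _
    have h1 : ∀ k < t.length, x0 k = y k := by
      intro k hk
      have hk0 : k < (t ++ [false]).length := by simp; omega
      have hk1 : k < (t ++ [true]).length := by simp; omega
      rw [hax0 k hk0, hay k hk1, List.getElem_append_left hk, List.getElem_append_left hk]
    have h2 : x0 t.length ≠ y t.length := by rw [hx0L, hyL]; simp
    have hd : Δ x0 y = t.length := delta_eq h1 h2
    have hne : x0 ≠ y := fun e => h2 (by rw [e])
    exact homit x0 hx0 y hyX hne (by rw [hd, hlen])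
  · apply main false ht0
    intro x hxX hax
    exact h ⟨x, hxX, hax⟩

/-- The branch set of an `n`-fat tree is `J_n`-positive. -/
theorem stmt6 (n : ℕ) (hn : 0 < n) (T : Set (List Bool)) (hT : nFat n T) :
    ¬ memJ n (branches T) := by
  rintro ⟨X, hX, hsub⟩
  choose m hmlt homit using hX
  have hroot : ([] : List Bool) ∈ T := by
    obtain ⟨u, hu⟩ := hT.2.1
    exact hT.1 u hu [] List.nil_prefix
  have step : ∀ (s : List Bool), s ∈ T → ∀ i : ℕ,
      ∃ t ∈ T, s <+: t ∧ s.length < t.length ∧ ∀ x, Agrees t x → x ∉ X i :=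
    fun s hs i => key hT (hmlt i) (homit i) hs
  choose! F hFT hFpre hFlen hFav using step
  let g : ℕ → {t : List Bool // t ∈ T} := fun i =>
    Nat.rec ⟨[], hroot⟩ (fun i p => ⟨F p.1 i, hFT p.1 p.2 i⟩) i
  have hgsucc : ∀ i, (g (i + 1)).1 = F (g i).1 i := fun i => rfl
  have hchain : ∀ i j, i ≤ j → (g i).1 <+: (g j).1 := by
    intro i j hij
    induction j with
    | zero => simp at hij; subst hij; exact List.prefix_rfl
    | succ j ih =>
      rcases Nat.lt_or_ge i (j + 1) with h | h
      · exact (ih (Nat.lt_succ_iff.mp h)).trans (hFpre (g j).1 (g j).2 j)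
      · have : i = j + 1 := le_antisymm hij h
        subst this; exact List.prefix_rfl
  have hglen : ∀ i, i ≤ (g i).1.length := by
    intro i
    induction i with
    | zero => simp
    | succ i ih =>
      have := hFlen (g i).1 (g i).2 i
      rw [hgsucc]
      omega
  set x : ℕ → Bool := fun k => (g (k + 1)).1.getD k false with hxdef
  have hagree : ∀ i, Agrees (g i).1 x := by
    intro i k hk
    have hk1 : k < (g (k + 1)).1.length := lt_of_lt_of_le (Nat.lt_succ_self k) (hglen (k + 1))
    show (g (k + 1)).1.getD k false = (g i).1[k]
    rw [List.getD_eq_getElem _ _ hk1]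
    rcases Nat.le_total i (k + 1) with h | h
    · exact (prefix_getElem (hchain i (k + 1) h) hk).symm
    · exact prefix_getElem (hchain (k + 1) i h) hk1
  have hxbr : x ∈ branches T := by
    intro k
    have hlen : k ≤ (g k).1.length := hglen k
    have heq : (List.ofFn fun i : Fin k => x i) = (g k).1.take k := by
      apply List.ext_getElem
      · simp [min_eq_left hlen]
      · intro j h1 h2
        simp only [List.getElem_ofFn, List.getElem_take]
        exact hagree k j (by simp at h1; omega)
    rw [heq]
    exact hT.1 (g k).1 (g k).2 _ (List.take_prefix _ _)
  have := hsub hxbr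
  rw [Set.mem_iUnion] at this
  obtain ⟨i, hxi⟩ := this
  exact hFav (g i).1 (g i).2 i x (by rw [← hgsucc]; exact hagree (i + 1)) hxi
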